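/- arXiv:1806.08031 — 2 statements merged into one kernel-verified Lean document; each statement's English description precedes it below -/
import Mathlib

section
/- If Z_1, ..., Z_n are i.i.d. standard normal random variables (n ≥ 2), Z̄ = (∑ Z_i)/n, and W = ∑_{i=1}^n (Z_i − Z̄)², then Z̄ and W are independent random variables. -/
open MeasureTheory ProbabilityTheory Finset Real ENNReal

namespace MeanIndepAux

/-- The standard Gaussian density on `Fin n → ℝ`. -/
noncomputable def ρ (n : ℕ) : (Fin n → ℝ) → ℝ≥0∞ := fun x => ∏ i, gaussianPDF 0 1 (x i)

lemma measurable_ρ (n : ℕ) : Measurable (ρ n) :=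
  Finset.measurable_prod _ fun i _ => (measurable_gaussianPDF 0 1).comp (measurable_pi_apply i)

lemma lintegral_pi_prod {n : ℕ} (μ : Measure ℝ) [SigmaFinite μ] (f : Fin n → ℝ → ℝ≥0∞)
    (hf : ∀ i, Measurable (f i)) :
    ∫⁻ x : Fin n → ℝ, ∏ i, f i (x i) ∂(Measure.pi fun _ => μ) = ∏ i, ∫⁻ y, f i y ∂μ := by
  induction n with
  | zero => simp
  | succ m ih =>
    have hmeas : Measurable fun x : Fin (m + 1) → ℝ => ∏ i, f i (x i) :=
      Finset.measurable_prod _ fun i _ => (hf i).comp (measurable_pi_apply i)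
    rw [← ((measurePreserving_piFinSuccAbove (fun _ : Fin (m + 1) => μ) 0).symm).lintegral_comp
      hmeas]
    have hsymm : ∀ a : ℝ × (Fin m → ℝ), ∀ i,
        (MeasurableEquiv.piFinSuccAbove (fun _ => ℝ) 0).symm a i
          = (Fin.cons a.1 a.2 : Fin (m + 1) → ℝ) i := by
      intro a i
      simp [MeasurableEquiv.piFinSuccAbove_symm_apply, Fin.insertNthEquiv, Fin.insertNth_zero]
    simp_rw [hsymm, Fin.prod_univ_succ, Fin.cons_zero, Fin.cons_succ]
    have key := lintegral_prod_mul (μ := μ) (ν := Measure.pi fun _ : Fin m => μ)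
      (f := f 0) (g := fun y : Fin m → ℝ => ∏ i, f i.succ (y i)) (hf 0).aemeasurable
      (Finset.measurable_prod _ fun i _ => (hf i.succ).comp (measurable_pi_apply i)).aemeasurable
    rw [key, ih _ (fun i => hf i.succ)]

lemma ρ_eq {n : ℕ} (x : Fin n → ℝ) :
    ρ n x = ENNReal.ofReal ((Real.sqrt (2 * π * 1))⁻¹ ^ n * Real.exp (-(∑ i, x i ^ 2) / 2)) := by
  rw [ρ]
  simp_rw [gaussianPDF, gaussianPDFReal, sub_zero, NNReal.coe_one, mul_one]
  rw [← ENNReal.ofReal_prod_of_nonneg (fun i _ => by positivity)]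
  congr 1
  rw [Finset.prod_mul_distrib, Finset.prod_const, Finset.card_univ, Fintype.card_fin,
    ← Real.exp_sum]
  congr 1
  simp [neg_div, Finset.sum_neg_distrib, ← Finset.sum_div]

lemma ρ_congr {n : ℕ} {x y : Fin n → ℝ} (h : ∑ i, x i ^ 2 = ∑ i, y i ^ 2) : ρ n x = ρ n y := by
  rw [ρ_eq, ρ_eq, h]

lemma pi_gaussian_eq (n : ℕ) :
    (Measure.pi fun _ : Fin n => gaussianReal 0 1) =
      (volume : Measure (Fin n → ℝ)).withDensity (ρ n) := by
  apply Measure.pi_eq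
  intro s hs
  rw [withDensity_apply _ (MeasurableSet.univ_pi hs),
    ← lintegral_indicator (MeasurableSet.univ_pi hs)]
  have hind : (Set.univ.pi s).indicator (ρ n)
      = fun x => ∏ i, (s i).indicator (gaussianPDF 0 1) (x i) := by
    ext x
    by_cases hx : x ∈ Set.univ.pi s
    · rw [Set.indicator_of_mem hx, ρ]
      exact Finset.prod_congr rfl fun i _ =>
        (Set.indicator_of_mem (hx i (Set.mem_univ i)) _).symm
    · rw [Set.indicator_of_notMem hx]
      have hex : ∃ i, x i ∉ s i := by simpa [Set.mem_pi] using hx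
      obtain ⟨i, hi⟩ := hex
      exact (Finset.prod_eq_zero (Finset.mem_univ i)
        (by rw [Set.indicator_of_notMem hi])).symm
  rw [volume_pi, hind, lintegral_pi_prod _ _
    (fun i => (measurable_gaussianPDF 0 1).indicator (hs i))]
  refine Finset.prod_congr rfl fun i _ => ?_
  rw [lintegral_indicator (hs i), ← withDensity_apply _ (hs i),
    ← gaussianReal_of_var_ne_zero 0 one_ne_zero]

lemma gaussianPi_map_eq {n : ℕ} {L : (Fin n → ℝ) → (Fin n → ℝ)}
    (hL : MeasurePreserving L (volume : Measure (Fin n → ℝ)) volume)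
    (hsum : ∀ x, ∑ i, L x i ^ 2 = ∑ i, x i ^ 2) :
    (Measure.pi fun _ : Fin n => gaussianReal 0 1).map L
      = Measure.pi fun _ : Fin n => gaussianReal 0 1 := by
  ext s hs
  rw [Measure.map_apply hL.measurable hs, pi_gaussian_eq,
    withDensity_apply _ (hL.measurable hs), withDensity_apply _ hs,
    ← lintegral_indicator (hL.measurable hs), ← lintegral_indicator hs,
    ← hL.lintegral_comp ((measurable_ρ n).indicator hs)]
  congr 1
  ext x
  by_cases hx : L x ∈ s
  · rw [Set.indicator_of_mem hx, Set.indicator_of_mem (by exact hx), ρ_congr (hsum x)]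
  · rw [Set.indicator_of_notMem hx, Set.indicator_of_notMem (by exact hx)]

lemma iIndep_coords (n : ℕ) :
    iIndepFun (fun i (x : Fin n → ℝ) => x i)
      (Measure.pi fun _ : Fin n => gaussianReal 0 1) := by
  classical
  rw [iIndepFun_iff_measure_inter_preimage_eq_mul]
  intro S sets H
  have hset : ∀ (T : Finset (Fin n)) (t : Fin n → Set ℝ),
      (⋂ i ∈ T, (fun x : Fin n → ℝ => x i) ⁻¹' t i)
        = Set.univ.pi (fun j => if j ∈ T then t j else Set.univ) := by
    intro T t
    ext x
    simp only [Set.mem_iInter, Set.mem_preimage, Set.mem_pi, Set.mem_univ, true_implies]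
    constructor
    · intro h j; split
      · exact h j ‹_›
      · trivial
    · intro h j hj
      have := h j
      rwa [if_pos hj] at this
  have hμbox : ∀ (T : Finset (Fin n)) (t : Fin n → Set ℝ),
      (Measure.pi fun _ : Fin n => gaussianReal 0 1)
          (⋂ i ∈ T, (fun x : Fin n → ℝ => x i) ⁻¹' t i)
        = ∏ i ∈ T, (gaussianReal 0 1) (t i) := by
    intro T t
    rw [hset T t, Measure.pi_pi]
    rw [← Finset.prod_subset (Finset.subset_univ T)
      (fun j _ hj => by rw [if_neg hj]; exact measure_univ)]
    exact Finset.prod_congr rfl fun j hj => by rw [if_pos hj]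
  rw [hμbox S sets]
  refine Finset.prod_congr rfl fun i hi => ?_
  have h2 := hμbox {i} sets
  simp only [Finset.mem_singleton, Set.iInter_iInter_eq_left, Finset.prod_singleton] at h2
  rw [← h2]

lemma indepFun_comp_map {Ω Ω' : Type*} [MeasurableSpace Ω] [MeasurableSpace Ω']
    {μ : Measure Ω} {J : Ω → Ω'} (hJ : Measurable J) {φ ψ : Ω' → ℝ}
    (hφ : Measurable φ) (hψ : Measurable ψ) (h : IndepFun φ ψ (μ.map J)) :
    IndepFun (fun ω => φ (J ω)) (fun ω => ψ (J ω)) μ := by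
  rw [indepFun_iff_measure_inter_preimage_eq_mul] at h ⊢
  intro s t hs ht
  have h2 := h s t hs ht
  rw [Measure.map_apply hJ ((hφ hs).inter (hψ ht)), Measure.map_apply hJ (hφ hs),
    Measure.map_apply hJ (hψ ht), Set.preimage_inter] at h2
  exact h2

end MeanIndepAux

open MeanIndepAux

/-- For i.i.d. standard normals, the sample mean `Z̄` and the sum of squared
deviations `W = ∑ (Zᵢ - Z̄)²` are independent. -/
theorem mean_indep_sum_sq_dev {Ω : Type*} [MeasureSpace Ω] (P : Measure Ω) [IsProbabilityMeasure P]
    (n : ℕ) (hn : 2 ≤ n) (Z : Fin n → Ω → ℝ)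
    (hmeas : ∀ i, Measurable (Z i))
    (hindep : iIndepFun Z P)
    (hlaw : ∀ i, P.map (Z i) = gaussianReal 0 1) :
    IndepFun (fun ω => (∑ i, Z i ω) / n)
      (fun ω => ∑ i, (Z i ω - (∑ j, Z j ω) / n) ^ 2) P := by
  classical
  haveI : NeZero n := ⟨by omega⟩
  have hnpos : (0 : ℝ) < n := by
    have : 0 < n := by omega
    exact_mod_cast this
  have hsn : (0 : ℝ) < Real.sqrt n := Real.sqrt_pos.mpr hnpos
  -- the Euclidean rotation
  set u : EuclideanSpace ℝ (Fin n) := WithLp.toLp 2 (fun _ => (Real.sqrt n)⁻¹) with hu_def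
  have hnorm_u : ‖u‖ = 1 := by
    rw [EuclideanSpace.norm_eq]
    have huis : ∀ i : Fin n, ‖u i‖ ^ 2 = (n : ℝ)⁻¹ := by
      intro i
      have hui : u i = (Real.sqrt n)⁻¹ := rfl
      rw [hui, Real.norm_eq_abs, sq_abs, ← Real.sqrt_inv, Real.sq_sqrt (by positivity)]
    rw [Finset.sum_congr rfl fun i _ => huis i, Finset.sum_const, Finset.card_univ,
      Fintype.card_fin, nsmul_eq_mul, mul_inv_cancel₀ (ne_of_gt hnpos), Real.sqrt_one]
  have hON : Orthonormal ℝ (({0} : Set (Fin n)).restrict (fun _ : Fin n => u)) := by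
    constructor
    · intro i; exact hnorm_u
    · haveI : Subsingleton ({0} : Set (Fin n)) := by
        constructor; rintro ⟨a, ha⟩ ⟨b, hb⟩
        simp only [Set.mem_singleton_iff] at ha hb
        subst ha; subst hb; rfl
      exact Subsingleton.pairwise
  obtain ⟨b, hb⟩ := hON.exists_orthonormalBasis_extension_of_card_eq
    (by simp [finrank_euclideanSpace])
  have hb0 : b 0 = u := hb 0 rfl
  set e := (MeasurableEquiv.toLp 2 (Fin n → ℝ)).symm with he_def
  set L : (Fin n → ℝ) → (Fin n → ℝ) := fun x => e (b.repr (e.symm x)) with hL_def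
  have hepres := EuclideanSpace.volume_preserving_symm_measurableEquiv_toLp (Fin n)
  have hLpres : MeasurePreserving L volume volume :=
    (hepres.comp b.repr.measurePreserving).comp hepres.symm
  have he_apply : ∀ (z : EuclideanSpace ℝ (Fin n)) (i : Fin n), e z i = z i := by
    intro z i
    simp [he_def]
  have he_symm_apply : ∀ (x : Fin n → ℝ) (i : Fin n), e.symm x i = x i := by
    intro x i
    simp [he_def]
  have key : ∀ z : EuclideanSpace ℝ (Fin n), ∑ i, (e z i) ^ 2 = ‖z‖ ^ 2 := by
    intro z
    rw [EuclideanSpace.norm_eq, Real.sq_sqrt (Finset.sum_nonneg fun i _ => by positivity)]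
    exact Finset.sum_congr rfl fun i _ => by rw [he_apply, Real.norm_eq_abs, sq_abs]
  have hL0 : ∀ x : Fin n → ℝ, L x 0 = (∑ i, x i) / Real.sqrt n := by
    intro x
    rw [hL_def]
    simp only
    rw [he_apply, b.repr_apply_apply, hb0, hu_def, PiLp.inner_apply]
    simp only [RCLike.inner_apply, conj_trivial]
    rw [← Finset.sum_mul, Finset.sum_congr rfl fun i _ => he_symm_apply x i, ← div_eq_mul_inv]
  have hLsum : ∀ x : Fin n → ℝ, ∑ i, L x i ^ 2 = ∑ i, x i ^ 2 := by
    intro x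
    calc ∑ i, L x i ^ 2 = ‖b.repr (e.symm x)‖ ^ 2 := key _
    _ = ‖e.symm x‖ ^ 2 := by rw [b.repr.norm_map]
    _ = ∑ i, x i ^ 2 := by
        rw [← key (e.symm x), Finset.sum_congr rfl fun i _ => by rw [he_apply, he_symm_apply]]
  -- independence of the two coordinate groups
  have hdisj : Disjoint ({0} : Finset (Fin n)) (Finset.univ.erase 0) :=
    Finset.disjoint_singleton_left.mpr (Finset.notMem_erase 0 _)
  have hbase := (iIndep_coords n).indepFun_finset {0} (Finset.univ.erase 0) hdisj
    (fun i => measurable_pi_apply i)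
  have hφm : Measurable fun v : (({0} : Finset (Fin n)) : Type _) → ℝ =>
      v ⟨0, Finset.mem_singleton_self 0⟩ / Real.sqrt n :=
    (measurable_pi_apply _).div_const _
  have hψm : Measurable fun v : ((Finset.univ.erase (0 : Fin n) : Finset (Fin n)) : Type _) → ℝ =>
      ∑ i, v i ^ 2 :=
    Finset.measurable_sum _ fun i _ => (measurable_pi_apply i).pow_const 2
  have h1 := hbase.comp hφm hψm
  have h1' : IndepFun (fun x : Fin n → ℝ => x 0 / Real.sqrt n)
      (fun x : Fin n → ℝ => ∑ i ∈ Finset.univ.erase (0 : Fin n), x i ^ 2)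
      (Measure.pi fun _ : Fin n => gaussianReal 0 1) := by
    have e2 : (fun x : Fin n → ℝ => ∑ i ∈ Finset.univ.erase (0 : Fin n), x i ^ 2)
        = (fun v : ((Finset.univ.erase (0 : Fin n) : Finset (Fin n)) : Type _) → ℝ =>
            ∑ i, v i ^ 2) ∘ (fun a (i : ((Finset.univ.erase (0 : Fin n) : Finset (Fin n)) :
              Type _)) => a ↑i) := by
      funext x
      exact (Finset.sum_coe_sort (Finset.univ.erase (0 : Fin n)) (fun i => x i ^ 2)).symm
    rw [e2]
    exact h1
  -- transfer along L
  have hLmap := gaussianPi_map_eq hLpres hLsum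
  have h2 := indepFun_comp_map (φ := fun x : Fin n → ℝ => x 0 / Real.sqrt n)
    (ψ := fun x : Fin n → ℝ => ∑ i ∈ Finset.univ.erase (0 : Fin n), x i ^ 2)
    hLpres.measurable
    ((measurable_pi_apply 0).div_const _)
    (Finset.measurable_sum _ fun i _ => (measurable_pi_apply i).pow_const 2)
    (by rw [hLmap]; exact h1')
  -- identify the two composed functions with the mean and sum of squared deviations
  have heq1 : (fun x : Fin n → ℝ => (∑ i, x i) / (n : ℝ))
      = fun x : Fin n → ℝ => L x 0 / Real.sqrt n := by
    funext x
    rw [hL0, div_div, Real.mul_self_sqrt hnpos.le]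
  have heq2 : (fun x : Fin n → ℝ => ∑ i, (x i - (∑ j, x j) / n) ^ 2)
      = fun x : Fin n → ℝ => ∑ i ∈ Finset.univ.erase (0 : Fin n), L x i ^ 2 := by
    funext x
    have hsplit : L x 0 ^ 2 + ∑ i ∈ Finset.univ.erase (0 : Fin n), L x i ^ 2
        = ∑ i, L x i ^ 2 :=
      Finset.add_sum_erase _ (fun i => L x i ^ 2) (Finset.mem_univ 0)
    have hL0sq : L x 0 ^ 2 = (∑ i, x i) ^ 2 / n := by
      rw [hL0, div_pow, Real.sq_sqrt hnpos.le]
    have halg : ∑ i, (x i - (∑ j, x j) / n) ^ 2 = ∑ i, x i ^ 2 - (∑ i, x i) ^ 2 / n := by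
      have step : ∑ i, (x i - (∑ j, x j) / n) ^ 2
          = ∑ i, (x i ^ 2 - 2 * ((∑ j, x j) / n) * x i + ((∑ j, x j) / n) ^ 2) :=
        Finset.sum_congr rfl fun i _ => by ring
      rw [step, Finset.sum_add_distrib, Finset.sum_sub_distrib, ← Finset.mul_sum,
        Finset.sum_const, Finset.card_univ, Fintype.card_fin, nsmul_eq_mul]
      field_simp
      ring
    have hLs := hLsum x
    linarith [hsplit, hL0sq, halg, hLs]
  have h3 : IndepFun (fun x : Fin n → ℝ => (∑ i, x i) / (n : ℝ))
      (fun x : Fin n → ℝ => ∑ i, (x i - (∑ j, x j) / n) ^ 2)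
      (Measure.pi fun _ : Fin n => gaussianReal 0 1) := by
    rw [heq1, heq2]
    exact h2
  -- transfer along the joint map
  have hJ : Measurable (fun ω => fun i => Z i ω) := measurable_pi_lambda _ hmeas
  have hPmap : (Measure.pi fun _ : Fin n => gaussianReal 0 1)
      = P.map (fun ω => fun i => Z i ω) := by
    apply Measure.pi_eq
    intro s hs
    rw [Measure.map_apply hJ (MeasurableSet.univ_pi hs)]
    have hpre : (fun ω => fun i => Z i ω) ⁻¹' Set.univ.pi s
        = ⋂ i ∈ Finset.univ, Z i ⁻¹' s i := by
      ext ω; simp [Set.mem_pi]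
    rw [hpre, hindep.measure_inter_preimage_eq_mul Finset.univ (fun i _ => hs i)]
    exact Finset.prod_congr rfl fun i _ => by
      rw [← Measure.map_apply (hmeas i) (hs i), hlaw i]
  have hmeanm : Measurable fun x : Fin n → ℝ => (∑ i, x i) / (n : ℝ) :=
    (Finset.measurable_sum _ fun i _ => measurable_pi_apply i).div_const _
  have hdevm : Measurable fun x : Fin n → ℝ => ∑ i, (x i - (∑ j, x j) / n) ^ 2 :=
    Finset.measurable_sum _ fun i _ => ((measurable_pi_apply i).sub
      ((Finset.measurable_sum _ fun j _ => measurable_pi_apply j).div_const _)).pow_const 2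
  exact indepFun_comp_map hJ hmeanm hdevm (by rw [← hPmap]; exact h3)
end

section
/- The sum of squares of k independent standard normal random variables has the Gamma distribution with shape parameter k/2 and rate 1/2 (the chi-squared distribution with k degrees of freedom). -/
open MeasureTheory ProbabilityTheory

namespace ChiSqAux

open Real Set Filter
open scoped ENNReal NNReal

/-- One-variable change of variables for lintegrals. -/
lemma lintegral_image_eq {s : Set ℝ} {f f' : ℝ → ℝ} (hs : MeasurableSet s)
    (hf' : ∀ x ∈ s, HasDerivWithinAt f (f' x) s x) (hf : InjOn f s) (g : ℝ → ℝ≥0∞) :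
    ∫⁻ x in f '' s, g x = ∫⁻ x in s, ENNReal.ofReal |f' x| * g (f x) := by
  simpa only [ContinuousLinearMap.det_toSpanSingleton] using
    MeasureTheory.lintegral_image_eq_lintegral_abs_det_fderiv_mul volume hs
      (fun x hx => (hf' x hx).hasFDerivWithinAt) hf g

lemma beta_integrable {a b : ℝ} (ha : 0 < a) (hb : 0 < b) :
    IntegrableOn (fun t : ℝ => t ^ (a - 1) * (1 - t) ^ (b - 1)) (Ioo (0:ℝ) 1) := by
  have h := Complex.betaIntegral_convergent (u := a) (v := b) (by simpa using ha) (by simpa using hb)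
  have h2 : IntegrableOn (fun x : ℝ => (x : ℂ) ^ ((a:ℂ) - 1) * ((1:ℂ) - x) ^ ((b:ℂ) - 1))
      (Ioo (0:ℝ) 1) := by
    have := h.1
    rw [intervalIntegrable_iff_integrableOn_Ioc_of_le zero_le_one] at h
    exact h.mono_set Ioo_subset_Ioc_self
  refine (h2.re).congr ?_
  rw [EventuallyEq, ae_restrict_iff' measurableSet_Ioo]
  refine ae_of_all _ (fun x hx => ?_)
  have hx0 : (0:ℝ) ≤ x := hx.1.le
  have hx1 : (0:ℝ) ≤ 1 - x := by linarith [hx.2]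
  have e1 : ((x : ℂ)) ^ ((a:ℂ) - 1) = ((x ^ (a - 1) : ℝ) : ℂ) := by
    rw [Complex.ofReal_cpow hx0]; push_cast; ring_nf
  have e2 : ((1:ℂ) - x) ^ ((b:ℂ) - 1) = (((1 - x) ^ (b - 1) : ℝ) : ℂ) := by
    rw [Complex.ofReal_cpow hx1]; push_cast; ring_nf
  simp [e1, e2, ← Complex.ofReal_mul]

lemma beta_value {a b : ℝ} (ha : 0 < a) (hb : 0 < b) :
    ∫ t in Ioo (0:ℝ) 1, t ^ (a - 1) * (1 - t) ^ (b - 1) =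
      Gamma a * Gamma b / Gamma (a + b) := by
  have key : Complex.Gamma a * Complex.Gamma b =
      Complex.Gamma ((a:ℂ) + b) * Complex.betaIntegral a b :=
    Complex.Gamma_mul_Gamma_eq_betaIntegral (by simpa using ha) (by simpa using hb)
  have hbeta : Complex.betaIntegral a b =
      ((∫ t in (0:ℝ)..1, t ^ (a - 1) * (1 - t) ^ (b - 1) : ℝ) : ℂ) := by
    rw [Complex.betaIntegral, ← intervalIntegral.integral_ofReal]
    refine intervalIntegral.integral_congr (fun x hx => ?_)
    rw [uIcc_of_le zero_le_one] at hx
    have hx0 : (0:ℝ) ≤ x := hx.1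
    have hx1 : (0:ℝ) ≤ 1 - x := by linarith [hx.2]
    have e1 : ((x : ℂ)) ^ ((a:ℂ) - 1) = ((x ^ (a - 1) : ℝ) : ℂ) := by
      rw [Complex.ofReal_cpow hx0]; push_cast; ring_nf
    have e2 : ((1:ℂ) - x) ^ ((b:ℂ) - 1) = (((1 - x) ^ (b - 1) : ℝ) : ℂ) := by
      rw [Complex.ofReal_cpow hx1]; push_cast; ring_nf
    simp [e1, e2, ← Complex.ofReal_mul]
  have hI : ∫ t in Ioo (0:ℝ) 1, t ^ (a - 1) * (1 - t) ^ (b - 1) =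
      ∫ t in (0:ℝ)..1, t ^ (a - 1) * (1 - t) ^ (b - 1) := by
    rw [intervalIntegral.integral_of_le zero_le_one, integral_Ioc_eq_integral_Ioo]
  have hcast : ((a:ℂ) + b) = ((a + b : ℝ) : ℂ) := by push_cast; ring
  rw [hbeta, hcast, Complex.Gamma_ofReal, Complex.Gamma_ofReal, Complex.Gamma_ofReal,
    ← Complex.ofReal_mul, ← Complex.ofReal_mul] at key
  have hreal : Gamma a * Gamma b = Gamma (a + b) *
      ∫ t in (0:ℝ)..1, t ^ (a - 1) * (1 - t) ^ (b - 1) := by exact_mod_cast key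
  have hG : Gamma (a + b) ≠ 0 := (Gamma_pos_of_pos (by linarith)).ne'
  rw [hI]
  rw [hreal]
  field_simp

lemma beta_lintegral {a b : ℝ} (ha : 0 < a) (hb : 0 < b) :
    ∫⁻ t in Ioo (0:ℝ) 1, ENNReal.ofReal (t ^ (a - 1) * (1 - t) ^ (b - 1)) =
      ENNReal.ofReal (Gamma a * Gamma b / Gamma (a + b)) := by
  rw [← beta_value ha hb, ← ofReal_integral_eq_lintegral_ofReal (beta_integrable ha hb)]
  rw [EventuallyLE, ae_restrict_iff' measurableSet_Ioo]
  refine ae_of_all _ (fun x hx => ?_)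
  have hx0 : (0:ℝ) < x := hx.1
  have hx1 : (0:ℝ) < 1 - x := by linarith [hx.2]
  positivity

lemma prod_withDensity (f g : ℝ → ℝ≥0∞) (hf : Measurable f) (hg : Measurable g)
    [SigmaFinite (volume.withDensity f)] [SigmaFinite (volume.withDensity g)] :
    (volume.withDensity f).prod (volume.withDensity g) =
      (volume.prod volume).withDensity (fun p => f p.1 * g p.2) := by
  refine Measure.prod_eq fun s t hs ht => ?_
  rw [withDensity_apply _ (hs.prod ht), ← Measure.prod_restrict,
    lintegral_prod_mul hf.aemeasurable hg.aemeasurable,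
    withDensity_apply _ hs, withDensity_apply _ ht]

lemma map_add_withDensity (f g : ℝ → ℝ≥0∞) (hf : Measurable f) (hg : Measurable g)
    [SigmaFinite (volume.withDensity f)] [SigmaFinite (volume.withDensity g)] :
    ((volume.withDensity f).prod (volume.withDensity g)).map (fun p : ℝ × ℝ => p.1 + p.2)
      = volume.withDensity (fun z => ∫⁻ x, f x * g (z - x)) := by
  have hadd : Measurable (fun p : ℝ × ℝ => p.1 + p.2) := measurable_fst.add measurable_snd
  have hc : Measurable (fun z : ℝ => ∫⁻ x, f x * g (z - x)) := by
    apply Measurable.lintegral_prod_right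
    exact (hf.comp measurable_snd).mul (hg.comp (measurable_fst.sub measurable_snd))
  rw [prod_withDensity f g hf hg]
  refine Measure.ext fun s hs => ?_
  rw [Measure.map_apply hadd hs, withDensity_apply _ (hadd hs), withDensity_apply _ hs]
  have h1 : ∫⁻ p in (fun p : ℝ × ℝ => p.1 + p.2) ⁻¹' s, f p.1 * g p.2 ∂(volume.prod volume)
      = ∫⁻ p : ℝ × ℝ, s.indicator 1 (p.1 + p.2) * (f p.1 * g p.2) ∂(volume.prod volume) := by
    rw [← lintegral_indicator (hadd hs) _]
    refine lintegral_congr fun p => ?_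
    simp only [Set.indicator, Set.mem_preimage]
    by_cases hp : p.1 + p.2 ∈ s <;> simp [hp]
  rw [h1]
  have hmeasF : Measurable (fun p : ℝ × ℝ => s.indicator 1 (p.1 + p.2) * (f p.1 * g p.2)) :=
    ((measurable_one.indicator hs).comp hadd).mul
      ((hf.comp measurable_fst).mul (hg.comp measurable_snd))
  rw [lintegral_prod _ hmeasF.aemeasurable]
  have h2 : ∀ x : ℝ, ∫⁻ y, s.indicator 1 (x + y) * (f x * g y)
      = ∫⁻ z, s.indicator 1 z * (f x * g (z - x)) := by
    intro x
    rw [← lintegral_add_right_eq_self (fun z => s.indicator 1 z * (f x * g (z - x))) x]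
    refine lintegral_congr fun y => ?_
    simp [add_comm, add_sub_cancel_right]
  simp_rw [h2]
  rw [lintegral_lintegral_swap (((measurable_one.indicator hs).comp measurable_snd).mul
      ((hf.comp measurable_fst).mul
        (hg.comp (measurable_snd.sub measurable_fst)))).aemeasurable,
    ← lintegral_indicator hs]
  refine lintegral_congr fun z => ?_
  rw [lintegral_const_mul' _ _ (by
    by_cases hzs : z ∈ s <;> simp [Set.indicator, hzs])]
  by_cases hzs : z ∈ s <;> simp [Set.indicator, hzs]

lemma ae_ne_zero : ∀ᵐ z : ℝ, z ≠ 0 := by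
  rw [ae_iff]
  simp only [not_not]
  simpa using Real.volume_singleton (a := 0)

lemma gamma_conv_density {a b r : ℝ} (ha : 0 < a) (hb : 0 < b) (hr : 0 < r) {z : ℝ}
    (hz : z ≠ 0) :
    ∫⁻ x, gammaPDF a r x * gammaPDF b r (z - x) = gammaPDF (a + b) r z := by
  rcases lt_or_gt_of_ne hz with hneg | hpos
  · have hzero : ∀ x : ℝ, gammaPDF a r x * gammaPDF b r (z - x) = 0 := by
      intro x
      rcases lt_or_ge x 0 with hx | hx
      · rw [gammaPDF_of_neg hx, zero_mul]
      · rw [gammaPDF_of_neg (by linarith : z - x < 0), mul_zero]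
    simp only [hzero, lintegral_zero, gammaPDF_of_neg hneg]
  -- z > 0 case
  have hGa := Real.Gamma_pos_of_pos ha
  have hGb := Real.Gamma_pos_of_pos hb
  set K : ℝ := z ^ (a + b - 1) * exp (-(r * z)) * (r ^ a * r ^ b / (Gamma a * Gamma b)) with hK
  have hKnn : 0 ≤ K := by positivity
  have key : (fun x => gammaPDF a r x * gammaPDF b r (z - x)) =ᵐ[volume]
      (Ioo 0 z).indicator (fun x => gammaPDF a r x * gammaPDF b r (z - x)) := by
    have h0 : ∀ᵐ x : ℝ, x ∉ ({0, z} : Set ℝ) := by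
      rw [ae_iff]
      simp only [not_not]
      have : volume ({0, z} : Set ℝ) = 0 :=
        Set.Countable.measure_zero ((Set.countable_singleton z).insert 0) volume
      exact this
    filter_upwards [h0] with x hx
    by_cases hmem : x ∈ Ioo 0 z
    · rw [Set.indicator_of_mem hmem]
    · rw [Set.indicator_of_notMem hmem]
      simp only [Set.mem_insert_iff, Set.mem_singleton_iff, not_or] at hx
      rw [Set.mem_Ioo, not_and_or, not_lt, not_lt] at hmem
      rcases hmem with h | h
      · rw [gammaPDF_of_neg (lt_of_le_of_ne h hx.1), zero_mul]
      · have hzx : z - x < 0 := by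
          rcases lt_or_eq_of_le h with h' | h'
          · linarith
          · exact absurd h'.symm hx.2
        rw [gammaPDF_of_neg hzx, mul_zero]
  rw [lintegral_congr_ae key, lintegral_indicator measurableSet_Ioo]
  have himg : Ioo (0:ℝ) z = (fun t : ℝ => z * t) '' Ioo 0 1 := by
    rw [Set.image_mul_left_Ioo hpos, mul_zero, mul_one]
  have hderiv : ∀ t ∈ Ioo (0:ℝ) 1,
      HasDerivWithinAt (fun t : ℝ => z * t) z (Ioo 0 1) t := by
    intro t _
    simpa using ((hasDerivAt_id t).const_mul z).hasDerivWithinAt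
  have hinj : InjOn (fun t : ℝ => z * t) (Ioo 0 1) :=
    (mul_right_injective₀ hpos.ne').injOn
  rw [himg, lintegral_image_eq measurableSet_Ioo hderiv hinj]
  have hpt : ∀ t ∈ Ioo (0:ℝ) 1,
      ENNReal.ofReal |z| * (gammaPDF a r (z * t) * gammaPDF b r (z - z * t)) =
        ENNReal.ofReal (K * (t ^ (a - 1) * (1 - t) ^ (b - 1))) := by
    intro t ht
    have ht0 : (0:ℝ) < t := ht.1
    have ht1 : (0:ℝ) < 1 - t := by linarith [ht.2]
    have hzt : (0:ℝ) ≤ z * t := by positivity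
    have hzt' : (0:ℝ) ≤ z - z * t := by nlinarith
    rw [gammaPDF_of_nonneg hzt, gammaPDF_of_nonneg hzt', abs_of_pos hpos,
      ← ENNReal.ofReal_mul (by positivity), ← ENNReal.ofReal_mul hpos.le]
    congr 1
    have e2 : z - z * t = z * (1 - t) := by ring
    have e1 : (z * t) ^ (a - 1) = z ^ (a - 1) * t ^ (a - 1) := mul_rpow hpos.le ht0.le
    have e3 : (z * (1 - t)) ^ (b - 1) = z ^ (b - 1) * (1 - t) ^ (b - 1) :=
      mul_rpow hpos.le ht1.le
    have e4 : exp (-(r * (z * t))) * exp (-(r * (z * (1 - t)))) = exp (-(r * z)) := by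
      rw [← Real.exp_add]; ring_nf
    have e5 : z * (z ^ (a - 1) * z ^ (b - 1)) = z ^ (a + b - 1) := by
      nth_rewrite 1 [← Real.rpow_one z]
      rw [← Real.rpow_add hpos, ← Real.rpow_add hpos]
      ring_nf
    rw [e2, e1, e3]
    calc z * (r ^ a / Gamma a * (z ^ (a - 1) * t ^ (a - 1)) * exp (-(r * (z * t))) *
          (r ^ b / Gamma b * (z ^ (b - 1) * (1 - t) ^ (b - 1)) * exp (-(r * (z * (1 - t))))))
        = (z * (z ^ (a - 1) * z ^ (b - 1))) *
            (exp (-(r * (z * t))) * exp (-(r * (z * (1 - t))))) *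
            (r ^ a * r ^ b / (Gamma a * Gamma b)) * (t ^ (a - 1) * (1 - t) ^ (b - 1)) := by
          ring
      _ = K * (t ^ (a - 1) * (1 - t) ^ (b - 1)) := by rw [e4, e5]
  rw [setLIntegral_congr_fun measurableSet_Ioo hpt]
  simp_rw [ENNReal.ofReal_mul hKnn]
  rw [lintegral_const_mul' _ _ ENNReal.ofReal_ne_top, beta_lintegral ha hb,
    ← ENNReal.ofReal_mul hKnn, gammaPDF_of_nonneg hpos.le]
  congr 1
  have hGab := Real.Gamma_pos_of_pos (by linarith : (0:ℝ) < a + b)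
  have hrab : r ^ a * r ^ b = r ^ (a + b) := (Real.rpow_add hr a b).symm
  rw [hK]
  field_simp
  rw [← hrab]

lemma gamma_conv {a b r : ℝ} (ha : 0 < a) (hb : 0 < b) (hr : 0 < r) :
    ((gammaMeasure a r).prod (gammaMeasure b r)).map (fun p : ℝ × ℝ => p.1 + p.2)
      = gammaMeasure (a + b) r := by
  have hma : Measurable (gammaPDF a r) := (measurable_gammaPDFReal a r).ennreal_ofReal
  have hmb : Measurable (gammaPDF b r) := (measurable_gammaPDFReal b r).ennreal_ofReal
  haveI i1 : IsProbabilityMeasure (volume.withDensity (gammaPDF a r)) :=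
    isProbabilityMeasure_gammaMeasure ha hr
  haveI i2 : IsProbabilityMeasure (volume.withDensity (gammaPDF b r)) :=
    isProbabilityMeasure_gammaMeasure hb hr
  rw [gammaMeasure, gammaMeasure, map_add_withDensity _ _ hma hmb, gammaMeasure]
  refine withDensity_congr_ae ?_
  filter_upwards [ae_ne_zero] with z hz
  exact gamma_conv_density ha hb hr hz

lemma gaussian_sq :
    (gaussianReal 0 1).map (fun x : ℝ => x ^ 2) = gammaMeasure (1 / 2) (1 / 2) := by
  have hsq : Measurable (fun x : ℝ => x ^ 2) := measurable_id.pow_const 2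
  have hφ : Measurable (gaussianPDF 0 1) := (measurable_gaussianPDFReal 0 1).ennreal_ofReal
  refine Measure.ext fun s hs => ?_
  rw [Measure.map_apply hsq hs, gaussianReal_of_var_ne_zero 0 one_ne_zero,
    withDensity_apply _ (hsq hs), gammaMeasure, withDensity_apply _ hs]
  set A : Set ℝ := (fun x : ℝ => x ^ 2) ⁻¹' s with hA
  have hAm : MeasurableSet A := hsq hs
  have hgamma0 : ∀ z : ℝ, z ≤ 0 → gammaPDF (1/2) (1/2) z = 0 := by
    intro z hz
    rcases hz.lt_or_eq with h | h
    · exact gammaPDF_of_neg h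
    · subst h
      rw [gammaPDF_of_nonneg le_rfl]
      rw [Real.zero_rpow (by norm_num : (1:ℝ)/2 - 1 ≠ 0)]
      simp
  -- split RHS
  have hsplit : ∫⁻ z in s, gammaPDF (1/2) (1/2) z
      = ∫⁻ z in s ∩ Ioi 0, gammaPDF (1/2) (1/2) z := by
    nth_rewrite 1 [← Set.inter_union_compl s (Ioi 0)]
    rw [lintegral_union (hs.inter measurableSet_Ioi.compl)
      (Set.disjoint_left.mpr (fun {x} hx hx' => hx'.2 hx.2))]
    have : ∫⁻ z in s ∩ (Ioi (0:ℝ))ᶜ, gammaPDF (1/2) (1/2) z = 0 := by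
      rw [setLIntegral_congr_fun (hs.inter measurableSet_Ioi.compl)
        (fun z hz => hgamma0 z (by simpa using hz.2))]
      simp
    rw [this, add_zero]
  -- split LHS
  have hL : ∫⁻ x in A, gaussianPDF 0 1 x
      = (∫⁻ x in A ∩ Iio 0, gaussianPDF 0 1 x) + ∫⁻ x in A ∩ Ioi 0, gaussianPDF 0 1 x := by
    have h1 : A =ᵐ[volume] (((A ∩ Iio 0) ∪ (A ∩ Ioi 0)) : Set ℝ) := by
      rw [MeasureTheory.ae_eq_set]
      constructor
      · refine measure_mono_null (fun x hx => ?_) (Real.volume_singleton (a := 0))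
        simp only [Set.mem_diff, Set.mem_union, Set.mem_inter_iff, Set.mem_Iio,
          Set.mem_Ioi, not_or, not_and] at hx
        simp only [Set.mem_singleton_iff]
        rcases hx with ⟨hxA, h2, h3⟩
        by_contra hne
        rcases lt_or_gt_of_ne hne with h | h
        · exact (h2 hxA h).elim
        · exact (h3 hxA h).elim
      · refine measure_mono_null (fun x hx => ?_) (measure_empty (μ := volume))
        simp only [Set.mem_diff, Set.mem_union, Set.mem_inter_iff] at hx
        exact absurd (hx.1.elim And.left And.left) hx.2
    rw [Measure.restrict_congr_set h1,
      lintegral_union (hAm.inter measurableSet_Ioi)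
        (Set.disjoint_left.mpr (fun {x} hx hx' => absurd (show x < 0 from hx.2) (not_lt.mpr (show (0:ℝ) < x from hx'.2).le)))]
  -- negation substitution
  have hneg : ∫⁻ x in A ∩ Iio 0, gaussianPDF 0 1 x
      = ∫⁻ x in A ∩ Ioi 0, gaussianPDF 0 1 x := by
    have himg : A ∩ Iio 0 = (fun x : ℝ => -x) '' (A ∩ Ioi 0) := by
      ext x
      simp only [Set.mem_image, Set.mem_inter_iff, hA, Set.mem_preimage, Set.mem_Iio,
        Set.mem_Ioi]
      constructor
      · rintro ⟨hxA, hx⟩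
        exact ⟨-x, ⟨by rwa [neg_pow, neg_one_pow_eq_one_iff_even (by norm_num) |>.mpr
          (by norm_num), one_mul], by linarith⟩, neg_neg x⟩
      · rintro ⟨y, ⟨hyA, hy⟩, rfl⟩
        exact ⟨by rwa [neg_pow, neg_one_pow_eq_one_iff_even (by norm_num) |>.mpr
          (by norm_num), one_mul], by linarith⟩
    rw [himg, lintegral_image_eq (hAm.inter measurableSet_Ioi)
      (fun x _ => (hasDerivAt_neg x).hasDerivWithinAt) neg_injective.injOn]
    refine setLIntegral_congr_fun (hAm.inter measurableSet_Ioi) (fun x _ => ?_)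
    simp [gaussianPDF, gaussianPDFReal, neg_sq]
  -- square substitution
  have hsq2 : ∫⁻ z in s ∩ Ioi 0, gammaPDF (1/2) (1/2) z
      = ∫⁻ x in A ∩ Ioi 0, (gaussianPDF 0 1 x + gaussianPDF 0 1 x) := by
    have himg : s ∩ Ioi 0 = (fun x : ℝ => x ^ 2) '' (A ∩ Ioi 0) := by
      ext z
      simp only [Set.mem_image, Set.mem_inter_iff, hA, Set.mem_preimage, Set.mem_Ioi]
      constructor
      · rintro ⟨hzs, hz0⟩
        exact ⟨Real.sqrt z, ⟨by rwa [Real.sq_sqrt hz0.le], Real.sqrt_pos.mpr hz0⟩,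
          Real.sq_sqrt hz0.le⟩
      · rintro ⟨x, ⟨hxA, hx0⟩, rfl⟩
        exact ⟨hxA, by positivity⟩
    have hderiv : ∀ x ∈ A ∩ Ioi (0:ℝ),
        HasDerivWithinAt (fun x : ℝ => x ^ 2) (2 * x) (A ∩ Ioi 0) x := by
      intro x _
      simpa using (hasDerivAt_pow 2 x).hasDerivWithinAt
    have hinj : InjOn (fun x : ℝ => x ^ 2) (A ∩ Ioi 0) := by
      intro p hp q hq h
      have hp0 : (0:ℝ) < p := hp.2
      have hq0 : (0:ℝ) < q := hq.2
      calc p = Real.sqrt (p ^ 2) := (Real.sqrt_sq hp0.le).symm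
        _ = Real.sqrt (q ^ 2) := by rw [(by exact h : p ^ 2 = q ^ 2)]
        _ = q := Real.sqrt_sq hq0.le
    rw [himg, lintegral_image_eq (hAm.inter measurableSet_Ioi) hderiv hinj]
    refine setLIntegral_congr_fun (hAm.inter measurableSet_Ioi) (fun x hx => ?_)
    have hx0 : (0:ℝ) < x := hx.2
    rw [gammaPDF_of_nonneg (sq_nonneg x), abs_of_pos (by linarith),
      ← ENNReal.ofReal_mul (by positivity)]
    have hrp : (x ^ 2 : ℝ) ^ ((1:ℝ)/2 - 1) = x⁻¹ := by
      rw [← Real.rpow_natCast x 2, ← Real.rpow_mul hx0.le]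
      norm_num [Real.rpow_neg_one]
    have hconst : ((1:ℝ)/2) ^ ((1:ℝ)/2) / Gamma (1/2) = (Real.sqrt (2*π*1))⁻¹ := by
      rw [Real.Gamma_one_half_eq, ← Real.sqrt_eq_rpow, mul_one, one_div,
        Real.sqrt_inv, Real.sqrt_mul (by norm_num : (0:ℝ) ≤ 2), div_eq_mul_inv, ← mul_inv]
    have hreal : 2 * x * ((1/2:ℝ) ^ ((1:ℝ)/2) / Gamma (1/2) * (x ^ 2) ^ ((1:ℝ)/2 - 1)
        * exp (-(1/2 * x ^ 2)))
        = gaussianPDFReal 0 1 x + gaussianPDFReal 0 1 x := by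
      rw [hrp, hconst]
      unfold gaussianPDFReal
      push_cast
      field_simp
      ring_nf
    rw [hreal, ENNReal.ofReal_add (gaussianPDFReal_nonneg 0 1 x) (gaussianPDFReal_nonneg 0 1 x)]
    rfl
  rw [hL, hneg, hsplit, hsq2, lintegral_add_left hφ]

lemma indep_map_add {Ω : Type*} [MeasurableSpace Ω] {P : Measure Ω} [IsProbabilityMeasure P]
    {f g : Ω → ℝ} (hf : Measurable f) (hg : Measurable g) (h : IndepFun f g P) :
    P.map (fun ω => f ω + g ω)
      = ((P.map f).prod (P.map g)).map (fun p : ℝ × ℝ => p.1 + p.2) := by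
  rw [← (indepFun_iff_map_prod_eq_prod_map_map hf.aemeasurable hg.aemeasurable).mp h,
    Measure.map_map (g := fun p : ℝ × ℝ => p.1 + p.2) (measurable_fst.add measurable_snd) (hf.prodMk hg)]
  rfl

end ChiSqAux

open ChiSqAux in
/-- The sum of squares of `k` independent standard normals has the chi-squared
distribution with `k` degrees of freedom, i.e. `Gamma(k/2, 1/2)`. -/
theorem sum_sq_std_normal_chi_sq {Ω : Type*} [MeasureSpace Ω] (P : Measure Ω)
    [IsProbabilityMeasure P] (k : ℕ) (hk : 1 ≤ k) (Y : Fin k → Ω → ℝ)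
    (hmeas : ∀ i, Measurable (Y i))
    (hindep : iIndepFun Y P)
    (hlaw : ∀ i, P.map (Y i) = gaussianReal 0 1) :
    P.map (fun ω => ∑ i, (Y i ω) ^ 2) = gammaMeasure ((k : ℝ) / 2) (1 / 2) := by
  have hsqm : ∀ i, Measurable (fun ω => Y i ω ^ 2) := fun i => (hmeas i).pow_const 2
  have hsq_indep : iIndepFun (fun i => (fun x : ℝ => x ^ 2) ∘ Y i) P :=
    hindep.comp _ (fun _ => measurable_id.pow_const 2)
  have hsq_law : ∀ i, P.map (fun ω => Y i ω ^ 2) = gammaMeasure (1 / 2) (1 / 2) := by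
    intro i
    rw [show (fun ω => Y i ω ^ 2) = (fun x : ℝ => x ^ 2) ∘ Y i from rfl,
      ← Measure.map_map (g := fun x : ℝ => x ^ 2) (by fun_prop) (hmeas i), hlaw i, gaussian_sq]
  -- induction over nonempty finsets
  have key : ∀ s : Finset (Fin k), s.Nonempty →
      P.map (fun ω => ∑ i ∈ s, Y i ω ^ 2) = gammaMeasure ((s.card : ℝ) / 2) (1 / 2) := by
    intro s hs
    induction hs using Finset.Nonempty.cons_induction with
    | singleton i => simpa using hsq_law i
    | cons i s hi hs ih =>
      have hsum_meas : Measurable (fun ω => ∑ j ∈ s, Y j ω ^ 2) :=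
        Finset.measurable_sum s (fun j _ => hsqm j)
      have hindep2 : IndepFun (fun ω => ∑ j ∈ s, Y j ω ^ 2) (fun ω => Y i ω ^ 2) P := by
        have := hsq_indep.indepFun_finset_sum_of_notMem
          (fun j => measurable_id.pow_const 2 |>.comp (hmeas j)) hi
        simpa [Finset.sum_fn, Function.comp_def] using this
      have hcard : (0:ℝ) < (s.card : ℝ) := by
        exact_mod_cast Finset.card_pos.mpr hs
      rw [show (fun ω => ∑ j ∈ Finset.cons i s hi, Y j ω ^ 2)
          = (fun ω => Y i ω ^ 2 + ∑ j ∈ s, Y j ω ^ 2) from by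
            funext ω; rw [Finset.sum_cons],
        indep_map_add (hsqm i) hsum_meas hindep2.symm, hsq_law i, ih,
        gamma_conv (by norm_num) (by positivity) (by norm_num)]
      congr 1
      rw [Finset.card_cons]
      push_cast
      ring
  have hne : (Finset.univ : Finset (Fin k)).Nonempty := by
    haveI : NeZero k := ⟨by omega⟩
    exact Finset.univ_nonempty
  simpa using key Finset.univ hne
end
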